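/- Let p ≥ 1, let F be a probability measure on [0,∞)^p with ∫ (β₁+⋯+β_p) F(dβ) < ∞, let γ₁,…,γ_p ≥ 0, let ρ₀ be a Lévy measure on (0,∞), and let ρ be the compound Lévy measure built from (F, ρ₀, γ). Let M(t₁,…,t_p) = ∫ e^{Σ_{k=1}^p t_k β_k} F(dβ) denote the moment generating function of F, which is finite on the nonpositive orthant. Then for all t₁,…,t_p ≥ 0, ∫_{[0,∞)^p} (1 - e^{-Σ_{k=1}^p t_k w_k}) ρ(dw₁,…,dw_p) = ∫₀^∞ [M(-w₀γ₁,…,-w₀γ_p) − M(-w₀(t₁+γ₁),…,-w₀(t_p+γ_p))] ρ₀(dw₀), and both sides are finite. -/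

import Mathlib

open MeasureTheory Filter Set Real Topology

/-- The compound Lévy measure on `[0,∞)^p` built from a score distribution `F` on `[0,∞)^p`,
a base Lévy measure `ρ₀` on `(0,∞)` and exponential tilting parameters `γ₁,…,γ_p ≥ 0`: the
pushforward of `e^{-w₀ Σ_k γ_k β_k} F(dβ) ρ₀(dw₀)` on `(0,∞) × [0,∞)^p` under the map
`(w₀, β) ↦ (w₀ β₁, …, w₀ β_p)`. -/
noncomputable def compoundLevy {p : ℕ} (F : Measure (Fin p → ℝ)) (ρ₀ : Measure ℝ)
    (γ : Fin p → ℝ) : Measure (Fin p → ℝ) :=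
  Measure.map (fun q : ℝ × (Fin p → ℝ) => fun k => q.1 * q.2 k)
    (((ρ₀.restrict (Set.Ioi 0)).prod F).withDensity
      fun q => ENNReal.ofReal (Real.exp (-q.1 * ∑ k, γ k * q.2 k)))

/-- The moment generating function of a measure `F` on `[0,∞)^p`. -/
noncomputable def mgfF {p : ℕ} (F : Measure (Fin p → ℝ)) (t : Fin p → ℝ) : ℝ :=
  ∫ β, Real.exp (∑ k, t k * β k) ∂F

private lemma min_mul_aux {x a : ℝ} (hx : 0 < x) (ha : 0 ≤ a) :
    min 1 (x * a) ≤ min 1 x * (1 + a) := by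
  rcases le_total 1 x with h | h
  · rw [min_eq_left h]
    calc min 1 (x * a) ≤ 1 := min_le_left _ _
    _ ≤ 1 * (1 + a) := by nlinarith
  · rw [min_eq_right h]
    calc min 1 (x * a) ≤ x * a := min_le_right _ _
    _ ≤ x * (1 + a) := by nlinarith

private lemma one_sub_exp_le_min {s : ℝ} (hs : 0 ≤ s) :
    1 - Real.exp (-s) ≤ min 1 s := by
  refine le_min ?_ ?_
  · have := Real.exp_pos (-s); linarith
  · have := Real.add_one_le_exp (-s); linarith

/-- Let `ρ` be the compound Lévy measure built from a probability measure
`F` on `[0,∞)^p` with finite first moment, tilting parameters `γ_k ≥ 0` and a base Lévy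
measure `ρ₀` on `(0,∞)`. Then for all `t₁,…,t_p ≥ 0`,
`∫ (1 - e^{-Σ_k t_k w_k}) ρ(dw) = ∫₀^∞ [M(-w₀ γ) - M(-w₀ (t + γ))] ρ₀(dw₀)`,
where `M` is the moment generating function of `F`, and both sides are finite. -/
theorem laplace_exponent_compound (p : ℕ) (hp : 1 ≤ p)
    (F : Measure (Fin p → ℝ)) [IsProbabilityMeasure F]
    (hFsupp : F {β | ∃ k, β k < 0} = 0)
    (hFmom : Integrable (fun β => ∑ k, β k) F)
    (γ : Fin p → ℝ) (hγ : ∀ k, 0 ≤ γ k)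
    (ρ₀ : Measure ℝ) (hρ₀supp : ρ₀ (Set.Iic 0) = 0)
    (hρ₀levy : ∫⁻ w in Set.Ioi (0 : ℝ), ENNReal.ofReal (min 1 w) ∂ρ₀ < ⊤)
    (t : Fin p → ℝ) (ht : ∀ k, 0 ≤ t k) :
    Integrable (fun w => 1 - Real.exp (-∑ k, t k * w k)) (compoundLevy F ρ₀ γ) ∧
    IntegrableOn (fun w₀ =>
        mgfF F (fun k => -(w₀ * γ k)) - mgfF F (fun k => -(w₀ * (t k + γ k))))
      (Set.Ioi 0) ρ₀ ∧
    ∫ w, (1 - Real.exp (-∑ k, t k * w k)) ∂(compoundLevy F ρ₀ γ) =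
      ∫ w₀ in Set.Ioi (0 : ℝ),
        (mgfF F (fun k => -(w₀ * γ k)) - mgfF F (fun k => -(w₀ * (t k + γ k)))) ∂ρ₀ := by
  classical
  set μ₀ : Measure ℝ := ρ₀.restrict (Set.Ioi 0) with hμ₀
  -- finiteness of ρ₀ on Ioi a for a > 0
  have hIoiFin : ∀ a : ℝ, 0 < a → ρ₀ (Set.Ioi a) < ⊤ := by
    intro a ha
    have hc : (0 : ENNReal) < ENNReal.ofReal (min 1 a) := by
      rw [ENNReal.ofReal_pos]; exact lt_min one_pos ha
    have h1 : ENNReal.ofReal (min 1 a) * ρ₀ (Set.Ioi a)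
        ≤ ∫⁻ w in Set.Ioi a, ENNReal.ofReal (min 1 w) ∂ρ₀ := by
      rw [← setLIntegral_const]
      refine setLIntegral_mono ((measurable_const.min measurable_id).ennreal_ofReal) ?_
      intro w hw
      exact ENNReal.ofReal_le_ofReal (min_le_min le_rfl (le_of_lt hw))
    have h2 : ∫⁻ w in Set.Ioi a, ENNReal.ofReal (min 1 w) ∂ρ₀
        ≤ ∫⁻ w in Set.Ioi (0:ℝ), ENNReal.ofReal (min 1 w) ∂ρ₀ :=
      lintegral_mono' (Measure.restrict_mono (Set.Ioi_subset_Ioi ha.le) le_rfl) le_rfl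
    by_contra hcontra
    rw [not_lt, top_le_iff] at hcontra
    rw [hcontra, ENNReal.mul_top hc.ne'] at h1
    exact absurd ((top_le_iff.mp (h1.trans h2)).symm ▸ hρ₀levy) (by simp [hμ₀])
  -- σ-finiteness of μ₀
  have hσ : SigmaFinite μ₀ := by
    refine ⟨⟨⟨fun n => Set.Iic 0 ∪ Set.Ioi (1 / (n + 1) : ℝ), fun _ => trivial, ?_, ?_⟩⟩⟩
    · intro n
      have h0 : μ₀ (Set.Iic 0) = 0 := by
        rw [hμ₀, Measure.restrict_apply measurableSet_Iic]
        exact measure_mono_null Set.inter_subset_left hρ₀supp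
      have h1 : μ₀ (Set.Ioi (1 / (n + 1) : ℝ)) ≤ ρ₀ (Set.Ioi (1 / (n + 1) : ℝ)) := by
        rw [hμ₀]; exact Measure.restrict_le_self _
      calc μ₀ (Set.Iic 0 ∪ Set.Ioi (1 / (n + 1) : ℝ))
          ≤ μ₀ (Set.Iic 0) + μ₀ (Set.Ioi (1 / (n + 1) : ℝ)) := measure_union_le _ _
        _ ≤ 0 + ρ₀ (Set.Ioi (1 / (n + 1) : ℝ)) := by rw [h0]; exact add_le_add le_rfl h1
        _ < ⊤ := by
            rw [zero_add]
            exact hIoiFin _ (by positivity)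
    · ext x
      simp only [Set.mem_iUnion, Set.mem_union, Set.mem_Iic, Set.mem_Ioi, Set.mem_univ, iff_true]
      rcases le_or_gt x 0 with hx | hx
      · exact ⟨0, Or.inl hx⟩
      · obtain ⟨n, hn⟩ := exists_nat_one_div_lt hx
        exact ⟨n, Or.inr hn⟩
  haveI := hσ
  -- basic notation
  set T : ℝ × (Fin p → ℝ) → (Fin p → ℝ) := fun q => fun k => q.1 * q.2 k with hTdef
  have hT : Measurable T :=
    measurable_pi_lambda _ fun k => measurable_fst.mul ((measurable_pi_apply k).comp measurable_snd)
  set f : (Fin p → ℝ) → ℝ := fun w => 1 - Real.exp (-∑ k, t k * w k) with hfdef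
  have hfm : StronglyMeasurable f := by
    have : Continuous f := by
      refine continuous_const.sub (Real.continuous_exp.comp ?_)
      exact (continuous_finset_sum _ fun k _ => continuous_const.mul (continuous_apply k)).neg
    exact this.stronglyMeasurable
  set e : ℝ × (Fin p → ℝ) → ℝ := fun q => Real.exp (-q.1 * ∑ k, γ k * q.2 k) with hedef
  have hsum_meas : ∀ c : Fin p → ℝ, Measurable fun q : ℝ × (Fin p → ℝ) => ∑ k, c k * q.2 k :=
    fun c => Finset.measurable_sum _ fun k _ =>
      (by fun_prop : Measurable fun q : ℝ × (Fin p → ℝ) => c k * q.2 k)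
  have he : Measurable e :=
    Real.measurable_exp.comp ((measurable_fst.neg).mul (hsum_meas γ))
  set h : ℝ × (Fin p → ℝ) → ℝ := fun q => e q * f (T q) with hhdef
  have hh_meas : Measurable h := he.mul (hfm.measurable.comp hT)
  -- a.e. facts
  have haeF : ∀ᵐ β ∂F, ∀ k, 0 ≤ β k := by
    rw [ae_iff]
    convert hFsupp using 2
    ext β
    simp [not_le]
  have haeP : ∀ᵐ q ∂(μ₀.prod F), 0 < q.1 ∧ ∀ k, 0 ≤ q.2 k := by
    have hms : MeasurableSet {q : ℝ × (Fin p → ℝ) | 0 < q.1 ∧ ∀ k, 0 ≤ q.2 k} := by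
      have : {q : ℝ × (Fin p → ℝ) | 0 < q.1 ∧ ∀ k, 0 ≤ q.2 k}
          = {q : ℝ × (Fin p → ℝ) | 0 < q.1} ∩ ⋂ k, {q : ℝ × (Fin p → ℝ) | 0 ≤ q.2 k} := by
        ext q; simp [Set.mem_iInter]
      rw [this]
      exact (measurableSet_lt measurable_const measurable_fst).inter
        (MeasurableSet.iInter fun k =>
          measurableSet_le measurable_const
            (show Measurable fun q : ℝ × (Fin p → ℝ) => q.2 k from
              (measurable_pi_apply k).comp measurable_snd))
    rw [Measure.ae_prod_iff_ae_ae hms]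
    filter_upwards [ae_restrict_mem measurableSet_Ioi] with x hx
    filter_upwards [haeF] with y hy
    exact ⟨hx, hy⟩
  -- integrable bound
  have hmin_int : Integrable (fun w₀ => min 1 w₀) μ₀ := by
    refine ⟨(continuous_const.min continuous_id).aestronglyMeasurable, ?_⟩
    rw [hasFiniteIntegral_iff_norm]
    have : ∫⁻ w, ENNReal.ofReal ‖min 1 w‖ ∂μ₀ = ∫⁻ w, ENNReal.ofReal (min 1 w) ∂μ₀ := by
      refine lintegral_congr_ae ?_
      filter_upwards [ae_restrict_mem measurableSet_Ioi] with w hw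
      rw [Real.norm_eq_abs, abs_of_nonneg (le_min zero_le_one (le_of_lt hw))]
    rw [this]
    exact hρ₀levy
  have hβk_int : ∀ k, Integrable (fun β => β k) F := by
    intro k
    refine hFmom.norm.mono' (measurable_pi_apply k).aestronglyMeasurable ?_
    filter_upwards [haeF] with β hβ
    rw [Real.norm_eq_abs, abs_of_nonneg (hβ k)]
    calc β k ≤ ∑ j, β j := Finset.single_le_sum (fun j _ => hβ j) (Finset.mem_univ k)
      _ ≤ ‖∑ j, β j‖ := le_abs_self _
  have htβ_int : Integrable (fun β => ∑ k, t k * β k) F := by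
    have := integrable_finset_sum (μ := F) Finset.univ
      (f := fun k (β : Fin p → ℝ) => t k * β k) (fun k _ => (hβk_int k).const_mul (t k))
    simpa using this
  have hB_int : Integrable (fun q : ℝ × (Fin p → ℝ) => min 1 q.1 * (1 + ∑ k, t k * q.2 k))
      (μ₀.prod F) := hmin_int.mul_prod ((integrable_const 1).add htβ_int)
  -- sums rewriting helpers
  have hsum1 : ∀ (x : ℝ) (c β : Fin p → ℝ), ∑ k, c k * (x * β k) = x * ∑ k, c k * β k := by
    intro x c β
    rw [Finset.mul_sum]
    exact Finset.sum_congr rfl fun k _ => by ring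
  have hsum2 : ∀ (x : ℝ) (c β : Fin p → ℝ), ∑ k, (-(x * c k)) * β k = -(x * ∑ k, c k * β k) := by
    intro x c β
    rw [Finset.mul_sum, ← Finset.sum_neg_distrib]
    exact Finset.sum_congr rfl fun k _ => by ring
  -- integrability of h
  have hh_int : Integrable h (μ₀.prod F) := by
    refine hB_int.mono' hh_meas.aestronglyMeasurable ?_
    filter_upwards [haeP] with q hq
    obtain ⟨hq1, hq2⟩ := hq
    have hG : (0:ℝ) ≤ ∑ k, γ k * q.2 k :=
      Finset.sum_nonneg fun k _ => mul_nonneg (hγ k) (hq2 k)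
    have hS : (0:ℝ) ≤ ∑ k, t k * q.2 k :=
      Finset.sum_nonneg fun k _ => mul_nonneg (ht k) (hq2 k)
    have he1 : e q ≤ 1 := by
      rw [hedef]
      exact Real.exp_le_one_iff.mpr (by nlinarith)
    have he0 : 0 ≤ e q := Real.exp_nonneg _
    have hfT : f (T q) = 1 - Real.exp (-(q.1 * ∑ k, t k * q.2 k)) := by
      rw [hfdef, hTdef]
      simp only
      rw [hsum1 q.1 t q.2]
    have hf0 : 0 ≤ f (T q) := by
      rw [hfT]
      have : Real.exp (-(q.1 * ∑ k, t k * q.2 k)) ≤ 1 :=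
        Real.exp_le_one_iff.mpr (by nlinarith)
      linarith
    have hfle : f (T q) ≤ min 1 (q.1 * ∑ k, t k * q.2 k) := by
      rw [hfT]
      exact one_sub_exp_le_min (by nlinarith)
    rw [hhdef, Real.norm_eq_abs]
    simp only
    rw [abs_of_nonneg (mul_nonneg he0 hf0)]
    calc e q * f (T q) ≤ 1 * f (T q) := by nlinarith
      _ = f (T q) := one_mul _
      _ ≤ min 1 (q.1 * ∑ k, t k * q.2 k) := hfle
      _ ≤ min 1 q.1 * (1 + ∑ k, t k * q.2 k) := min_mul_aux hq1 hS
  -- the compound measure as a map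
  have hcl : compoundLevy F ρ₀ γ
      = Measure.map T ((μ₀.prod F).withDensity fun q => ENNReal.ofReal (e q)) := rfl
  have hdens : (fun q : ℝ × (Fin p → ℝ) => ENNReal.ofReal (e q))
      = fun q => (Real.toNNReal (e q) : ENNReal) := rfl
  have hdens_meas : Measurable fun q : ℝ × (Fin p → ℝ) => Real.toNNReal (e q) :=
    he.real_toNNReal
  have hsmul_eq : (fun q : ℝ × (Fin p → ℝ) => Real.toNNReal (e q) • f (T q)) = h := by
    funext q
    rw [hhdef]
    simp only [NNReal.smul_def, Real.coe_toNNReal (e q) (Real.exp_nonneg _), smul_eq_mul]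
  -- integrability on the compound measure
  have hint_ρ : Integrable f (compoundLevy F ρ₀ γ) := by
    rw [hcl, integrable_map_measure hfm.aestronglyMeasurable hT.aemeasurable, hdens]
    rw [Function.comp_def, integrable_withDensity_iff_integrable_smul hdens_meas]
    rw [hsmul_eq]
    exact hh_int
  -- the LHS integral
  have hint_eq : ∫ w, f w ∂(compoundLevy F ρ₀ γ) = ∫ q, h q ∂(μ₀.prod F) := by
    rw [hcl, integral_map hT.aemeasurable hfm.aestronglyMeasurable, hdens,
      integral_withDensity_eq_integral_smul hdens_meas]
    exact congrArg (fun g => ∫ q, g q ∂(μ₀.prod F)) hsmul_eq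
  -- the inner integral
  have hinner : ∀ᵐ w₀ ∂μ₀, ∫ β, h (w₀, β) ∂F
      = mgfF F (fun k => -(w₀ * γ k)) - mgfF F (fun k => -(w₀ * (t k + γ k))) := by
    filter_upwards [ae_restrict_mem measurableSet_Ioi] with w₀ hw₀
    have hw₀' : (0:ℝ) ≤ w₀ := le_of_lt hw₀
    have hexp_int : ∀ c : Fin p → ℝ, (∀ k, 0 ≤ c k) →
        Integrable (fun β => Real.exp (∑ k, (-(w₀ * c k)) * β k)) F := by
      intro c hc
      refine (integrable_const (1:ℝ)).mono'
        (Real.measurable_exp.comp (Finset.measurable_sum _ fun k _ =>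
          (measurable_pi_apply k).const_mul _)).aestronglyMeasurable ?_
      filter_upwards [haeF] with β hβ
      rw [Real.norm_eq_abs, abs_of_nonneg (Real.exp_nonneg _)]
      refine Real.exp_le_one_iff.mpr ?_
      refine Finset.sum_nonpos fun k _ => ?_
      have : 0 ≤ w₀ * c k * β k := mul_nonneg (mul_nonneg hw₀' (hc k)) (hβ k)
      nlinarith
    have hrw : ∀ᵐ β ∂F, h (w₀, β)
        = Real.exp (∑ k, (-(w₀ * γ k)) * β k)
          - Real.exp (∑ k, (-(w₀ * (t k + γ k))) * β k) := by
      refine ae_of_all _ fun β => ?_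
      have hsplit : ∑ k, (t k + γ k) * β k = (∑ k, t k * β k) + ∑ k, γ k * β k := by
        rw [← Finset.sum_add_distrib]
        exact Finset.sum_congr rfl fun k _ => by ring
      rw [hhdef, hedef, hfdef, hTdef]
      simp only
      rw [hsum1 w₀ t β, hsum2 w₀ γ β, hsum2 w₀ (fun k => t k + γ k) β]
      rw [mul_sub, mul_one, ← Real.exp_add]
      congr 2
      · ring
      · rw [hsplit]; ring
    rw [integral_congr_ae hrw,
      integral_sub (hexp_int γ hγ) (hexp_int (fun k => t k + γ k)
        (fun k => add_nonneg (ht k) (hγ k))),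
      mgfF, mgfF]
  -- conjunct 2
  have h2 : Integrable (fun w₀ =>
      mgfF F (fun k => -(w₀ * γ k)) - mgfF F (fun k => -(w₀ * (t k + γ k)))) μ₀ :=
    hh_int.integral_prod_left.congr hinner
  refine ⟨hint_ρ, h2, ?_⟩
  rw [hint_eq, integral_prod h hh_int]
  exact integral_congr_ae hinner
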